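/- Let B and D be bicategories, F : B → D a pseudofunctor, and suppose (x₁, θ₁) and (x₂, θ₂) are both colimits of F. Then x₁ and x₂ are equivalent objects of D: there exist 1-morphisms u : x₁ → x₂ and v : x₂ → x₁ together with invertible 2-morphisms from v ∘ u to the identity 1-morphism of x₁ and from u ∘ v to the identity 1-morphism of x₂. -/

import Mathlib

open CategoryTheory Bicategory

attribute [local instance] Pseudofunctor.StrongTrans.categoryStruct

universe w₁ w₂ v₁ v₂ u₁ u₂

namespace BicatColim

variable (B : Type u₁) [Bicategory.{w₁, v₁} B] {D : Type u₂} [Bicategory.{w₂, v₂} D]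

/-- The constant pseudofunctor with value `x`. -/
@[simps]
def constPF (x : D) : Pseudofunctor B D where
  obj _ := x
  map _ := 𝟙 x
  map₂ _ := 𝟙 (𝟙 x)
  mapId _ := Iso.refl (𝟙 x)
  mapComp _ _ := (λ_ (𝟙 x)).symm

end BicatColim

namespace BicatColim

variable {B : Type u₁} [Bicategory.{w₁, v₁} B] {D : Type u₂} [Bicategory.{w₂, v₂} D]

variable (B) in
/-- The constant transformation `const_u : const x ⟶ const y` induced by a 1-morphism
`u : x ⟶ y`. -/
@[simps]
def constTrans {x y : D} (u : x ⟶ y) : constPF B x ⟶ constPF B y where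
  app _ := u
  naturality _ := λ_ u ≪≫ (ρ_ u).symm
  naturality_naturality _ := by
    show 𝟙 (𝟙 x) ▷ u ≫ ((λ_ u).hom ≫ (ρ_ u).inv) = ((λ_ u).hom ≫ (ρ_ u).inv) ≫ u ◁ 𝟙 (𝟙 y)
    simp
  naturality_id _ := by
    show ((λ_ u).hom ≫ (ρ_ u).inv) ≫ u ◁ 𝟙 (𝟙 y) = 𝟙 (𝟙 x) ▷ u ≫ (λ_ u).hom ≫ (ρ_ u).inv
    simp
  naturality_comp _ _ := by
    show ((λ_ u).hom ≫ (ρ_ u).inv) ≫ u ◁ (λ_ (𝟙 y)).inv = (λ_ (𝟙 x)).inv ▷ u ≫ (α_ (𝟙 x) (𝟙 x) u).hom ≫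
      𝟙 x ◁ ((λ_ u).hom ≫ (ρ_ u).inv) ≫ (α_ (𝟙 x) u (𝟙 y)).inv ≫ ((λ_ u).hom ≫ (ρ_ u).inv) ▷ 𝟙 y ≫
      (α_ u (𝟙 y) (𝟙 y)).hom
    bicategory

end BicatColim

namespace BicatColim

variable {B : Type u₁} [Bicategory.{w₁, v₁} B] {D : Type u₂} [Bicategory.{w₂, v₂} D]

/-- The category `Hom(F, G)` whose objects are strong natural transformations `F ⟹ G`
and whose morphisms are modifications. -/
instance homCategory (F G : Pseudofunctor B D) : Category (F ⟶ G) where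
  Hom η θ := Oplax.OplaxTrans.Modification η.toOplax.toOplax θ.toOplax.toOplax
  id η := Oplax.OplaxTrans.Modification.id η.toOplax.toOplax
  comp Γ Λ := Γ.vcomp Λ

end BicatColim

namespace BicatColim

variable {B : Type u₁} [Bicategory.{w₁, v₁} B] {D : Type u₂} [Bicategory.{w₂, v₂} D]

variable (B) in
/-- The modification `const_β : const_{u₁} ⟶ const_{u₂}` induced by a 2-morphism `β`. -/
@[simps]
def constMod {x y : D} {u₁ u₂ : x ⟶ y} (β : u₁ ⟶ u₂) :
    constTrans B u₁ ⟶ constTrans B u₂ where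
  app _ := β
  naturality _ := by
    show 𝟙 x ◁ β ≫ ((λ_ u₂).hom ≫ (ρ_ u₂).inv) = ((λ_ u₁).hom ≫ (ρ_ u₁).inv) ≫ β ▷ 𝟙 y
    bicategory

end BicatColim

namespace BicatColim

variable {B : Type u₁} [Bicategory.{w₁, v₁} B] {D : Type u₂} [Bicategory.{w₂, v₂} D]

variable (B) in
/-- Whiskering a 2-morphism `β : u₁ ⟶ u₂` with a transformation `θ : F ⟶ const x` yields a
modification `const_{u₁} ∘ θ ⟶ const_{u₂} ∘ θ`. -/
def whiskerConst {F : Pseudofunctor B D} {x y : D} (θ : F ⟶ constPF B x)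
    {u₁ u₂ : x ⟶ y} (β : u₁ ⟶ u₂) :
    (θ ≫ constTrans B u₁) ⟶ (θ ≫ constTrans B u₂) :=
  (Oplax.OplaxTrans.whiskerLeft θ.toOplax.toOplax (Oplax.OplaxTrans.Hom.of (constMod B β))).as

end BicatColim

namespace BicatColim

variable {B : Type u₁} [Bicategory.{w₁, v₁} B] {D : Type u₂} [Bicategory.{w₂, v₂} D]

variable (B) in
/-- The functor `D(x, y) ⥤ Hom(F, const y)` sending `u : x ⟶ y` to the composite
transformation `const_u ∘ θ` and a 2-morphism `β` to the induced modification. -/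
@[simps]
def precompFunctor {F : Pseudofunctor B D} {x : D} (θ : F ⟶ constPF B x) (y : D) :
    (x ⟶ y) ⥤ (F ⟶ constPF B y) where
  obj u := θ ≫ constTrans B u
  map β := whiskerConst B θ β
  map_id u := by
    apply Oplax.OplaxTrans.Modification.ext
    funext a
    exact Bicategory.whiskerLeft_id _ _
  map_comp β₁ β₂ := by
    apply Oplax.OplaxTrans.Modification.ext
    funext a
    exact Bicategory.whiskerLeft_comp _ _ _

variable (B) in
/-- `(x, θ)` is a colimit of the pseudofunctor `F : B ⥤ D` if for every object `y` of `D`,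
postcomposition with `θ` is an equivalence of categories `D(x, y) ≌ Hom(F, const y)`. -/
def IsColimit {F : Pseudofunctor B D} {x : D} (θ : F ⟶ constPF B x) : Prop :=
  ∀ y : D, (precompFunctor B θ y).IsEquivalence

end BicatColim

namespace BicatColim

variable {B : Type u₁} [Bicategory.{w₁, v₁} B] {D : Type u₂} [Bicategory.{w₂, v₂} D]

/-- Build an iso of strong transformations from componentwise isos. -/
def isoOfComponents {F G : Pseudofunctor B D} {η θ : F ⟶ G}
    (app : ∀ a, η.app a ≅ θ.app a)
    (nat : ∀ {a b} (f : a ⟶ b), F.map f ◁ (app b).hom ≫ (θ.naturality f).hom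
        = (η.naturality f).hom ≫ (app a).hom ▷ G.map f) : η ≅ θ where
  hom := { app := fun a ↦ (app a).hom, naturality := fun f => nat f }
  inv := { app := fun a ↦ (app a).inv,
           naturality := fun {a b} f => by
             change F.map f ◁ (app b).inv ≫ (η.naturality f).hom = (θ.naturality f).hom ≫ (app a).inv ▷ G.map f
             rw [← cancel_mono ((app a).hom ▷ G.map f)]
             simp [← nat f] }
  hom_inv_id := by apply Oplax.OplaxTrans.Modification.ext; funext a; exact (app a).hom_inv_id
  inv_hom_id := by apply Oplax.OplaxTrans.Modification.ext; funext a; exact (app a).inv_hom_id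

/-- `θ ≫ const_{𝟙 x} ≅ θ`. -/
def unitIso {F : Pseudofunctor B D} {x : D} (θ : F ⟶ constPF B x) :
    θ ≫ constTrans B (𝟙 x) ≅ θ :=
  isoOfComponents (fun a => ρ_ (θ.app a)) (fun {a b} f => by
    simp
    change F.map f ◁ (ρ_ (θ.app b)).hom ≫ (θ.naturality f).hom = ((α_ (F.map f) (θ.app b) (𝟙 x)).inv ≫ (θ.naturality f).hom ▷ 𝟙 x ≫ (α_ (θ.app a) (𝟙 x) (𝟙 x)).hom ≫ θ.app a ◁ ((λ_ (𝟙 x)).hom ≫ (ρ_ (𝟙 x)).inv) ≫ (α_ (θ.app a) (𝟙 x) (𝟙 x)).inv) ≫ (ρ_ (θ.app a)).hom ▷ 𝟙 x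
    bicategory)

/-- `θ ≫ const_{u ≫ v} ≅ (θ ≫ const_u) ≫ const_v`. -/
def assocIso {F : Pseudofunctor B D} {x y z : D} (θ : F ⟶ constPF B x)
    (u : x ⟶ y) (v : y ⟶ z) :
    θ ≫ constTrans B (u ≫ v) ≅ (θ ≫ constTrans B u) ≫ constTrans B v :=
  isoOfComponents (fun a => (α_ (θ.app a) u v).symm) (fun {a b} f => by
    simp [← Bicategory.whiskerLeft_comp]
    change F.map f ◁ (α_ (θ.app b) u v).inv ≫
      (α_ (F.map f) (θ.app b ≫ u) v).inv ≫
      ((α_ (F.map f) (θ.app b) u).inv ≫ (θ.naturality f).hom ▷ u ≫ (α_ (θ.app a) (𝟙 x) u).hom ≫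
        θ.app a ◁ ((λ_ u).hom ≫ (ρ_ u).inv) ≫ (α_ (θ.app a) u (𝟙 y)).inv) ▷ v ≫
      (α_ (θ.app a ≫ u) (𝟙 y) v).hom ≫
      ((α_ (θ.app a) u (𝟙 y ≫ v)).hom ≫ θ.app a ◁ u ◁ ((λ_ v).hom ≫ (ρ_ v).inv) ≫
        (α_ (θ.app a) u (v ≫ 𝟙 z)).inv) ≫
      (α_ (θ.app a ≫ u) v (𝟙 z)).inv =
      ((α_ (F.map f) (θ.app b) (u ≫ v)).inv ≫ (θ.naturality f).hom ▷ (u ≫ v) ≫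
        (α_ (θ.app a) (𝟙 x) (u ≫ v)).hom ≫ θ.app a ◁ ((λ_ (u ≫ v)).hom ≫ (ρ_ (u ≫ v)).inv) ≫
        (α_ (θ.app a) (u ≫ v) (𝟙 z)).inv) ≫ (α_ (θ.app a) u v).inv ▷ 𝟙 z
    bicategory)

/-- Whiskering an iso of transformations on the right with `const_v`. -/
def whiskerIso {F : Pseudofunctor B D} {y z : D} {η θ : F ⟶ constPF B y}
    (e : η ≅ θ) (v : y ⟶ z) :
    η ≫ constTrans B v ≅ θ ≫ constTrans B v where
  hom := (Oplax.OplaxTrans.whiskerRight (Oplax.OplaxTrans.Hom.of e.hom)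
    (constTrans B v).toOplax.toOplax).as
  inv := (Oplax.OplaxTrans.whiskerRight (Oplax.OplaxTrans.Hom.of e.inv)
    (constTrans B v).toOplax.toOplax).as
  hom_inv_id := by
    apply Oplax.OplaxTrans.Modification.ext
    funext a
    have h : e.hom.app a ≫ e.inv.app a = 𝟙 (η.app a) :=
      congrArg (fun (m : Oplax.OplaxTrans.Modification _ _) => m.app a) e.hom_inv_id
    show _ ▷ _ ≫ _ ▷ _ = _
    rw [← comp_whiskerRight, h]
    exact id_whiskerRight _ _
  inv_hom_id := by
    apply Oplax.OplaxTrans.Modification.ext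
    funext a
    have h : e.inv.app a ≫ e.hom.app a = 𝟙 (θ.app a) :=
      congrArg (fun (m : Oplax.OplaxTrans.Modification _ _) => m.app a) e.inv_hom_id
    show _ ▷ _ ≫ _ ▷ _ = _
    rw [← comp_whiskerRight, h]
    exact id_whiskerRight _ _

end BicatColim

namespace BicatColim

variable {B : Type u₁} [Bicategory.{w₁, v₁} B] {D : Type u₂} [Bicategory.{w₂, v₂} D]

/-- Any two colimits `(x₁, θ₁)` and `(x₂, θ₂)` of a pseudofunctor
`F : B ⥤ D` are equivalent objects of `D`: there are 1-morphisms `u : x₁ ⟶ x₂` and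
`v : x₂ ⟶ x₁` together with invertible 2-morphisms `u ≫ v ≅ 𝟙 x₁` and `v ≫ u ≅ 𝟙 x₂`. -/
theorem colimit_unique_up_to_equivalence (F : Pseudofunctor B D) {x₁ x₂ : D}
    (θ₁ : F ⟶ constPF B x₁) (θ₂ : F ⟶ constPF B x₂)
    (h₁ : IsColimit B θ₁) (h₂ : IsColimit B θ₂) :
    ∃ (u : x₁ ⟶ x₂) (v : x₂ ⟶ x₁),
      Nonempty (u ≫ v ≅ 𝟙 x₁) ∧ Nonempty (v ≫ u ≅ 𝟙 x₂) := by
  haveI := h₁ x₂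
  haveI := h₂ x₁
  haveI := h₁ x₁
  haveI := h₂ x₂
  obtain ⟨u, ⟨e₁⟩⟩ : ∃ u : x₁ ⟶ x₂, Nonempty (θ₁ ≫ constTrans B u ≅ θ₂) :=
    ⟨(precompFunctor B θ₁ x₂).objPreimage θ₂,
      ⟨(precompFunctor B θ₁ x₂).objObjPreimageIso θ₂⟩⟩
  obtain ⟨v, ⟨e₂⟩⟩ : ∃ v : x₂ ⟶ x₁, Nonempty (θ₂ ≫ constTrans B v ≅ θ₁) :=
    ⟨(precompFunctor B θ₂ x₁).objPreimage θ₁,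
      ⟨(precompFunctor B θ₂ x₁).objObjPreimageIso θ₁⟩⟩
  refine ⟨u, v, ⟨?_⟩, ⟨?_⟩⟩
  · exact (precompFunctor B θ₁ x₁).preimageIso
      (assocIso θ₁ u v ≪≫ whiskerIso e₁ v ≪≫ e₂ ≪≫ (unitIso θ₁).symm)
  · exact (precompFunctor B θ₂ x₂).preimageIso
      (assocIso θ₂ v u ≪≫ whiskerIso e₂ u ≪≫ e₁ ≪≫ (unitIso θ₂).symm)

end BicatColim
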